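/- Let A be an m×n real matrix, z, s ∈ ℝⁿ with z > 0 and s > 0, Z = diag(z), S = diag(s), and D = Z^{1/2} S^{−1/2}. Let δz, δs ∈ ℝⁿ, δλ ∈ ℝᵐ, and r ∈ ℝⁿ satisfy A δz = 0, Aᵀδλ + δs = 0, and S δz + Z δs = r. Then ‖D⁻¹ δz‖ ≤ ‖D⁻¹ δz + D δs‖, ‖D δs‖ ≤ ‖D⁻¹ δz + D δs‖, and ‖D⁻¹ δz + D δs‖ = ‖(Z S)^{−1/2} r‖. In particular, if r = z ∘ s, then ‖D⁻¹ δz‖ ≤ √(zᵀs) and ‖D δs‖ ≤ √(zᵀs). -/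

import Mathlib

open Matrix

noncomputable def euclNorm {n : ℕ} (v : Fin n → ℝ) : ℝ :=
  ‖(WithLp.equiv 2 (Fin n → ℝ)).symm v‖

lemma euclNorm_eq {n : ℕ} (v : Fin n → ℝ) :
    euclNorm v = Real.sqrt (∑ i, v i ^ 2) := by
  unfold euclNorm
  rw [EuclideanSpace.norm_eq]
  simp [Real.norm_eq_abs, sq_abs]

/-- Scaled-direction bounds: with `z, s > 0`, `D = Z^{1/2} S^{-1/2}`, and
`(δz, δlam, δs)` solving `A δz = 0`, `Aᵀ δlam + δs = 0`, `S δz + Z δs = r`,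
one has `‖D⁻¹ δz‖ ≤ ‖D⁻¹ δz + D δs‖`, `‖D δs‖ ≤ ‖D⁻¹ δz + D δs‖`, and
`‖D⁻¹ δz + D δs‖ = ‖(Z S)^{-1/2} r‖`; in particular, if `r = z ∘ s`, then
`‖D⁻¹ δz‖ ≤ √(zᵀ s)` and `‖D δs‖ ≤ √(zᵀ s)`. -/
theorem scaled_direction_bounds {m n : ℕ}
    (A : Matrix (Fin m) (Fin n) ℝ)
    (z s : Fin n → ℝ) (hz : ∀ i, 0 < z i) (hs : ∀ i, 0 < s i)
    (D : Matrix (Fin n) (Fin n) ℝ)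
    (hD : D = Matrix.diagonal (fun i => Real.sqrt (z i) / Real.sqrt (s i)))
    (δz δs : Fin n → ℝ) (δlam : Fin m → ℝ) (r : Fin n → ℝ)
    (h1 : A *ᵥ δz = 0)
    (h2 : Aᵀ *ᵥ δlam + δs = 0)
    (h3 : Matrix.diagonal s *ᵥ δz + Matrix.diagonal z *ᵥ δs = r) :
    euclNorm (D⁻¹ *ᵥ δz) ≤ euclNorm (D⁻¹ *ᵥ δz + D *ᵥ δs) ∧
    euclNorm (D *ᵥ δs) ≤ euclNorm (D⁻¹ *ᵥ δz + D *ᵥ δs) ∧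
    euclNorm (D⁻¹ *ᵥ δz + D *ᵥ δs)
      = euclNorm ((Matrix.diagonal fun i => (Real.sqrt (z i * s i))⁻¹) *ᵥ r) ∧
    (r = z * s →
      euclNorm (D⁻¹ *ᵥ δz) ≤ Real.sqrt (z ⬝ᵥ s) ∧
      euclNorm (D *ᵥ δs) ≤ Real.sqrt (z ⬝ᵥ s)) := by
  have hzs : ∀ i, Real.sqrt (z i) ≠ 0 := fun i => Real.sqrt_ne_zero'.2 (hz i)
  have hss : ∀ i, Real.sqrt (s i) ≠ 0 := fun i => Real.sqrt_ne_zero'.2 (hs i)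
  have hDinv : D⁻¹ = Matrix.diagonal (fun i => (Real.sqrt (z i) / Real.sqrt (s i))⁻¹) := by
    rw [hD]
    apply Matrix.inv_eq_right_inv
    rw [Matrix.diagonal_mul_diagonal]
    have : (fun i => Real.sqrt (z i) / Real.sqrt (s i) * (Real.sqrt (z i) / Real.sqrt (s i))⁻¹) = fun _ => (1:ℝ) := by
      funext i; exact mul_inv_cancel₀ (div_ne_zero (hzs i) (hss i))
    rw [this, Matrix.diagonal_one]
  -- componentwise formulas
  have hu : ∀ i, (D⁻¹ *ᵥ δz) i = Real.sqrt (s i) / Real.sqrt (z i) * δz i := by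
    intro i
    rw [hDinv]
    simp [Matrix.mulVec_diagonal, inv_div]
  have hv : ∀ i, (D *ᵥ δs) i = Real.sqrt (z i) / Real.sqrt (s i) * δs i := by
    intro i
    rw [hD]
    simp [Matrix.mulVec_diagonal]
  -- orthogonality
  have hortho : δz ⬝ᵥ δs = 0 := by
    have hδs : δs = -(Aᵀ *ᵥ δlam) := by
      have := h2
      linear_combination (norm := module) h2
    rw [hδs]
    rw [dotProduct_neg, Matrix.dotProduct_mulVec, Matrix.vecMul_transpose, h1]
    simp
  have hcross : ∑ i, (D⁻¹ *ᵥ δz) i * (D *ᵥ δs) i = 0 := by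
    have : ∀ i, (D⁻¹ *ᵥ δz) i * (D *ᵥ δs) i = δz i * δs i := by
      intro i
      rw [hu, hv]
      have hone : Real.sqrt (s i) / Real.sqrt (z i) * (Real.sqrt (z i) / Real.sqrt (s i)) = 1 := by
        rw [div_mul_div_comm, mul_comm, div_self (mul_ne_zero (hzs i) (hss i))]
      linear_combination δz i * δs i * hone
    simp_rw [this]
    exact hortho
  -- sum of squares identity
  have hsumsq : ∑ i, ((D⁻¹ *ᵥ δz) + (D *ᵥ δs)) i ^ 2
      = (∑ i, (D⁻¹ *ᵥ δz) i ^ 2) + ∑ i, (D *ᵥ δs) i ^ 2 := by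
    have : ∀ i, ((D⁻¹ *ᵥ δz) + (D *ᵥ δs)) i ^ 2
        = (D⁻¹ *ᵥ δz) i ^ 2 + 2 * ((D⁻¹ *ᵥ δz) i * (D *ᵥ δs) i) + (D *ᵥ δs) i ^ 2 := by
      intro i; simp [Pi.add_apply]; ring
    simp_rw [this, Finset.sum_add_distrib, ← Finset.mul_sum, hcross]
    ring
  have hnn1 : (0:ℝ) ≤ ∑ i, (D⁻¹ *ᵥ δz) i ^ 2 := Finset.sum_nonneg fun i _ => sq_nonneg _
  have hnn2 : (0:ℝ) ≤ ∑ i, (D *ᵥ δs) i ^ 2 := Finset.sum_nonneg fun i _ => sq_nonneg _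
  have ineq1 : euclNorm (D⁻¹ *ᵥ δz) ≤ euclNorm (D⁻¹ *ᵥ δz + D *ᵥ δs) := by
    rw [euclNorm_eq, euclNorm_eq]
    apply Real.sqrt_le_sqrt
    rw [hsumsq]; linarith
  have ineq2 : euclNorm (D *ᵥ δs) ≤ euclNorm (D⁻¹ *ᵥ δz + D *ᵥ δs) := by
    rw [euclNorm_eq, euclNorm_eq]
    apply Real.sqrt_le_sqrt
    rw [hsumsq]; linarith
  -- equality
  have heqvec : (D⁻¹ *ᵥ δz + D *ᵥ δs)
      = (Matrix.diagonal fun i => (Real.sqrt (z i * s i))⁻¹) *ᵥ r := by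
    funext i
    have hr : r i = s i * δz i + z i * δs i := by
      rw [← h3]; simp [Matrix.mulVec_diagonal]
    rw [Pi.add_apply, hu, hv, Matrix.mulVec_diagonal, hr,
      Real.sqrt_mul (le_of_lt (hz i))]
    have e1 : Real.sqrt (s i) / Real.sqrt (z i)
        = s i / (Real.sqrt (z i) * Real.sqrt (s i)) := by
      rw [div_eq_div_iff (hzs i) (mul_ne_zero (hzs i) (hss i)),
        mul_comm (Real.sqrt (z i)) (Real.sqrt (s i)), ← mul_assoc,
        Real.mul_self_sqrt (hs i).le]
    have e2 : Real.sqrt (z i) / Real.sqrt (s i)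
        = z i / (Real.sqrt (z i) * Real.sqrt (s i)) := by
      rw [div_eq_div_iff (hss i) (mul_ne_zero (hzs i) (hss i)), ← mul_assoc,
        Real.mul_self_sqrt (hz i).le]
    rw [e1, e2, div_mul_eq_mul_div, div_mul_eq_mul_div, ← add_div]
    ring
  have heq : euclNorm (D⁻¹ *ᵥ δz + D *ᵥ δs)
      = euclNorm ((Matrix.diagonal fun i => (Real.sqrt (z i * s i))⁻¹) *ᵥ r) := by
    rw [heqvec]
  refine ⟨ineq1, ineq2, heq, fun hr => ?_⟩
  have hfin : euclNorm (D⁻¹ *ᵥ δz + D *ᵥ δs) = Real.sqrt (z ⬝ᵥ s) := by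
    rw [heq, euclNorm_eq]
    congr 1
    rw [dotProduct]
    apply Finset.sum_congr rfl
    intro i _
    have h0 : 0 < z i * s i := mul_pos (hz i) (hs i)
    rw [Matrix.mulVec_diagonal, hr, Pi.mul_apply, mul_pow, inv_pow, Real.sq_sqrt h0.le]
    field_simp
  rw [hfin] at ineq1 ineq2
  exact ⟨ineq1, ineq2⟩
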